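/- Let (S,w) be a hereditary 2-3-Set Packing instance, A a solution with no local improvement of size at most 10, B an optimum solution, A ∩ B = ∅, and C, B_1, B_2 defined via the first weight-distribution step. Then no set u ∈ A receives strictly more than w(u) in the first step; i.e., the total weight sent to u by sets of B_1 with unique A-neighbor u and by edges from B_2 incident to u is at most w(u). -/

import Mathlib

open scoped Classical

namespace SetPacking

variable {α : Type*}

/-- Weight of a set: `|s| - 1` (so 1 for 2-element sets and 2 for 3-element sets). -/
noncomputable def wt (s : Finset α) : ℕ := s.card - 1

/-- Total weight of a collection of sets. -/
noncomputable def wsum (X : Finset (Finset α)) : ℕ := ∑ s ∈ X, wt s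

/-- `N(X, A)`: the sets of `A` intersecting some member of `X` (this includes `X ∩ A`
when the sets involved are nonempty). -/
noncomputable def nbhd (X A : Finset (Finset α)) : Finset (Finset α) :=
  A.filter (fun a => ∃ x ∈ X, (x ∩ a).Nonempty)

/-- A sub-collection consisting of pairwise disjoint sets. -/
def PairwiseDisjointSets (X : Finset (Finset α)) : Prop :=
  ∀ x ∈ X, ∀ y ∈ X, x ≠ y → x ∩ y = ∅

/-- `X` is a local improvement of `A`: a disjoint sub-collection with
`w(X) > w(N(X, A))`, or equal weight and strictly more weight-2 (i.e. 3-element)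
sets in `X` than in `N(X, A)`. -/
def IsLocalImprovement (A X : Finset (Finset α)) : Prop :=
  PairwiseDisjointSets X ∧
    (wsum (nbhd X A) < wsum X ∨
      (wsum X = wsum (nbhd X A) ∧
        ((nbhd X A).filter (fun s => s.card = 3)).card
          < (X.filter (fun s => s.card = 3)).card))

/-- `B₁`: the sets of `B` with exactly one neighbor in `A` (in the conflict graph). -/
noncomputable def B1 (A B : Finset (Finset α)) : Finset (Finset α) :=
  B.filter (fun v => (A.filter (fun a => (v ∩ a).Nonempty)).card = 1)

/-- `B₂`: the weight-2 sets of `B` with exactly two incident edges in the multigraph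
conflict graph (that is, `∑_{a ∈ A} |v ∩ a| = 2`), connecting to two distinct sets
of `A`. -/
noncomputable def B2 (A B : Finset (Finset α)) : Finset (Finset α) :=
  B.filter (fun v => v.card = 3 ∧ (∑ a ∈ A, (v ∩ a).card) = 2 ∧
    (A.filter (fun a => (v ∩ a).Nonempty)).card = 2)

/-- The total amount of weight that `u` receives in the first distribution step:
each `v ∈ B₁` sends its weight `wt v` to its unique neighbor in `A`, and each
`v ∈ B₂` sends 1 along each of its two edges (one unit to each of its two
distinct neighbors in `A`). -/
noncomputable def received (A B : Finset (Finset α)) (u : Finset α) : ℕ :=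
  (∑ v ∈ (B1 A B).filter (fun v => (v ∩ u).Nonempty), wt v) +
    ((B2 A B).filter (fun v => (v ∩ u).Nonempty)).card

/-- `C`: the sets of `A` receiving exactly their own weight in the first step. -/
noncomputable def Cset (A B : Finset (Finset α)) : Finset (Finset α) :=
  A.filter (fun u => received A B u = wt u)

end SetPacking

open SetPacking

/-- Hereditary 2-3-Set Packing instance `S`, solution `A` with no
local improvement of size at most 10, optimum solution `B`, `A ∩ B = ∅`.  Then no set
`u ∈ A` receives strictly more than its own weight `wt u` in the first
weight-distribution step. -/
theorem first_step_at_most_own_weight {α : Type*} (S A B : Finset (Finset α))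
    (hcards : ∀ s ∈ S, s.card = 2 ∨ s.card = 3)
    (hher : ∀ s ∈ S, s.card = 3 → ∀ t ⊆ s, t.card = 2 → t ∈ S)
    (hAS : A ⊆ S) (hBS : B ⊆ S)
    (hAdisj : PairwiseDisjointSets A) (hBdisj : PairwiseDisjointSets B)
    (hAB : Disjoint A B)
    (hBopt : ∀ X ⊆ S, PairwiseDisjointSets X → wsum X ≤ wsum B)
    (hnoimp : ∀ X ⊆ S, X.card ≤ 10 → ¬ IsLocalImprovement A X) :
    ∀ u ∈ A, received A B u ≤ wt u := by

  classical
  intro u hu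
  by_contra hgt
  push_neg at hgt
  have huS : u ∈ S := hAS hu
  have hucard : u.card = 2 ∨ u.card = 3 := hcards u huS
  have hAeq : ∀ a ∈ A, ∀ b ∈ A, (a ∩ b).Nonempty → a = b := by
    intro a ha b hb hab
    by_contra hne
    rw [hAdisj a ha b hb hne] at hab
    exact Finset.not_nonempty_empty hab
  have hBeq : ∀ a ∈ B, ∀ b ∈ B, (a ∩ b).Nonempty → a = b := by
    intro a ha b hb hab
    by_contra hne
    rw [hBdisj a ha b hb hne] at hab
    exact Finset.not_nonempty_empty hab
  set F1 := (B1 A B).filter (fun v => (v ∩ u).Nonempty) with hF1def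
  set F2 := (B2 A B).filter (fun v => (v ∩ u).Nonempty) with hF2def
  have hF1B : ∀ v ∈ F1, v ∈ B := fun v hv =>
    (Finset.mem_filter.mp ((Finset.mem_filter.mp hv).1)).1
  have hF1u : ∀ v ∈ F1, (v ∩ u).Nonempty := fun v hv => (Finset.mem_filter.mp hv).2
  have hF1deg : ∀ v ∈ F1, (A.filter (fun a => (v ∩ a).Nonempty)).card = 1 := fun v hv =>
    (Finset.mem_filter.mp ((Finset.mem_filter.mp hv).1)).2
  have hF2B : ∀ v ∈ F2, v ∈ B := fun v hv =>
    (Finset.mem_filter.mp ((Finset.mem_filter.mp hv).1)).1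
  have hF2u : ∀ v ∈ F2, (v ∩ u).Nonempty := fun v hv => (Finset.mem_filter.mp hv).2
  have hF2card3 : ∀ v ∈ F2, v.card = 3 := fun v hv =>
    (Finset.mem_filter.mp ((Finset.mem_filter.mp hv).1)).2.1
  have hF2sum : ∀ v ∈ F2, (∑ a ∈ A, (v ∩ a).card) = 2 := fun v hv =>
    (Finset.mem_filter.mp ((Finset.mem_filter.mp hv).1)).2.2.1
  have hF2deg : ∀ v ∈ F2, (A.filter (fun a => (v ∩ a).Nonempty)).card = 2 := fun v hv =>
    (Finset.mem_filter.mp ((Finset.mem_filter.mp hv).1)).2.2.2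
  have hF1nb : ∀ v ∈ F1, ∀ a ∈ A, (v ∩ a).Nonempty → a = u := by
    intro v hv a ha hva
    obtain ⟨b, hb⟩ := Finset.card_eq_one.mp (hF1deg v hv)
    have hau : a ∈ A.filter (fun a => (v ∩ a).Nonempty) := Finset.mem_filter.mpr ⟨ha, hva⟩
    have huu : u ∈ A.filter (fun a => (v ∩ a).Nonempty) :=
      Finset.mem_filter.mpr ⟨hu, hF1u v hv⟩
    rw [hb, Finset.mem_singleton] at hau huu
    rw [hau, huu]
  have key : ∀ v ∈ F2, ∃ p e : α, p ∈ v ∧ p ∈ u ∧ e ∈ v ∧ (∀ a ∈ A, e ∉ a) ∧ p ≠ e := by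
    intro v hv
    obtain ⟨p, hp⟩ := hF2u v hv
    have hpu := Finset.mem_inter.mp hp
    have he : ∃ e ∈ v, ∀ a ∈ A, e ∉ a := by
      by_contra hc
      push_neg at hc
      have hsub : v ⊆ A.biUnion (fun a => v ∩ a) := by
        intro e hev
        obtain ⟨a, ha, hea⟩ := hc e hev
        exact Finset.mem_biUnion.mpr ⟨a, ha, Finset.mem_inter.mpr ⟨hev, hea⟩⟩
      have h1 := Finset.card_le_card hsub
      have h2 := Finset.card_biUnion_le (s := A) (t := fun a => v ∩ a)
      have h3 := hF2card3 v hv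
      have h4 := hF2sum v hv
      omega
    obtain ⟨e, hev, hea⟩ := he
    refine ⟨p, e, hpu.1, hpu.2, hev, hea, ?_⟩
    intro hpe
    exact hea u hu (hpe ▸ hpu.2)
  set t : Finset α → Finset α := fun v =>
    if h : v ∈ F2 then {(key v h).choose, (key v h).choose_spec.choose} else ∅ with htdef
  have ht : ∀ v ∈ F2, (t v) ⊆ v ∧ (t v).card = 2 ∧ ((t v) ∩ u).Nonempty ∧
      (∀ a ∈ A, ((t v) ∩ a).Nonempty → a = u) := by
    intro v hv
    obtain ⟨p, e, hpv, hpu, hev, heA, hpe, htv⟩ :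
        ∃ p e : α, p ∈ v ∧ p ∈ u ∧ e ∈ v ∧ (∀ a ∈ A, e ∉ a) ∧ p ≠ e ∧ t v = {p, e} := by
      obtain ⟨hpv, hpu, hev, heA, hpe⟩ := (key v hv).choose_spec.choose_spec
      exact ⟨_, _, hpv, hpu, hev, heA, hpe, by simp only [htdef]; rw [dif_pos hv]⟩
    have hsub : t v ⊆ v := by
      rw [htv]
      intro x hx
      rcases Finset.mem_insert.mp hx with h | h
      · exact h ▸ hpv
      · exact (Finset.mem_singleton.mp h) ▸ hev
    refine ⟨hsub, ?_, ?_, ?_⟩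
    · rw [htv, Finset.card_insert_of_notMem (by simpa using hpe), Finset.card_singleton]
    · exact ⟨p, Finset.mem_inter.mpr ⟨by rw [htv]; simp, hpu⟩⟩
    · intro a ha hta
      obtain ⟨x, hx⟩ := hta
      have hxt := Finset.mem_inter.mp hx
      have hxtv := hxt.1
      rw [htv] at hxtv
      rcases Finset.mem_insert.mp hxtv with h | h
      · exact hAeq a ha u hu ⟨x, Finset.mem_inter.mpr ⟨hxt.2, by rw [h]; exact hpu⟩⟩
      · exact absurd hxt.2 ((Finset.mem_singleton.mp h) ▸ heA a ha)
  have htne : ∀ v ∈ F2, (t v).Nonempty := by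
    intro v hv
    apply Finset.card_pos.mp
    rw [(ht v hv).2.1]; norm_num
  have htinj : ∀ v ∈ F2, ∀ w ∈ F2, t v = t w → v = w := by
    intro v hv w hw he
    obtain ⟨x, hx⟩ := htne v hv
    exact hBeq v (hF2B v hv) w (hF2B w hw)
      ⟨x, Finset.mem_inter.mpr ⟨(ht v hv).1 hx, (ht w hw).1 (he ▸ hx)⟩⟩
  set X := F1 ∪ F2.image t with hXdef
  have hcover : ∀ x ∈ X, ∃ b ∈ B, x ⊆ b ∧
      ((x ∈ F1 ∧ x = b) ∨ (∃ v ∈ F2, b = v ∧ x = t v)) := by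
    intro x hx
    rcases Finset.mem_union.mp hx with h | h
    · exact ⟨x, hF1B x h, Finset.Subset.refl x, Or.inl ⟨h, rfl⟩⟩
    · obtain ⟨v, hv, rfl⟩ := Finset.mem_image.mp h
      exact ⟨v, hF2B v hv, (ht v hv).1, Or.inr ⟨v, hv, rfl, rfl⟩⟩
  have hXdisj : PairwiseDisjointSets X := by
    intro x hx y hy hxy
    by_contra hne'
    apply hxy
    have hne : (x ∩ y).Nonempty := Finset.nonempty_iff_ne_empty.mpr hne'
    obtain ⟨b, hbB, hxb, hxc⟩ := hcover x hx
    obtain ⟨c, hcB, hyc, hycc⟩ := hcover y hy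
    obtain ⟨z, hz⟩ := hne
    have hzz := Finset.mem_inter.mp hz
    have hbc : b = c := hBeq b hbB c hcB ⟨z, Finset.mem_inter.mpr ⟨hxb hzz.1, hyc hzz.2⟩⟩
    rcases hxc with ⟨hx1, hxb⟩ | ⟨v, hv, hbv, hxtv⟩
    · rcases hycc with ⟨hy1, hyb⟩ | ⟨w, hw, hcw, hytw⟩
      · exact hxb.trans (hbc.trans hyb.symm)
      · exfalso
        have h1 := hF1deg x hx1
        have h2 := hF2deg w hw
        rw [hxb, hbc, hcw] at h1
        omega
    · rcases hycc with ⟨hy1, hyb⟩ | ⟨w, hw, hcw, hytw⟩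
      · exfalso
        have h1 := hF1deg y hy1
        have h2 := hF2deg v hv
        rw [hyb, ← hbc, hbv] at h1
        omega
      · rw [hxtv, hytw]
        congr 1
        rw [← hbv, hbc, hcw]
  have hXu : ∀ x ∈ X, (x ∩ u).Nonempty := by
    intro x hx
    rcases Finset.mem_union.mp hx with h | h
    · exact hF1u x h
    · obtain ⟨v, hv, rfl⟩ := Finset.mem_image.mp h
      exact (ht v hv).2.2.1
  have hXS : X ⊆ S := by
    intro x hx
    rcases Finset.mem_union.mp hx with h | h
    · exact hBS (hF1B x h)
    · obtain ⟨v, hv, rfl⟩ := Finset.mem_image.mp h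
      exact hher v (hBS (hF2B v hv)) (hF2card3 v hv) (t v) (ht v hv).1 (ht v hv).2.1
  have hdisjF : Disjoint F1 (F2.image t) := by
    rw [Finset.disjoint_left]
    intro x hx hximg
    obtain ⟨v, hv, hxv⟩ := Finset.mem_image.mp hximg
    obtain ⟨z, hz⟩ := htne v hv
    have hxveq : x = v := hBeq x (hF1B x hx) v (hF2B v hv)
      ⟨z, Finset.mem_inter.mpr ⟨hxv ▸ hz, (ht v hv).1 hz⟩⟩
    have h1 := hF1deg x hx
    have h2 := hF2deg v hv
    rw [hxveq] at h1
    omega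
  have hXeq : wsum X = received A B u := by
    rw [hXdef]
    unfold wsum
    rw [Finset.sum_union hdisjF, Finset.sum_image htinj]
    have h1 : ∀ v ∈ F2, wt (t v) = 1 := by
      intro v hv
      unfold wt
      rw [(ht v hv).2.1]
    rw [Finset.sum_congr rfl h1, Finset.sum_const, smul_eq_mul, mul_one]
    rfl
  have hXne : ∃ x ∈ X, (x ∩ u).Nonempty := by
    have hpos : 0 < received A B u := by
      have : 1 ≤ wt u := by unfold wt; omega
      omega
    rw [← hXeq] at hpos
    have : X.Nonempty := by
      by_contra hc
      rw [Finset.not_nonempty_iff_eq_empty] at hc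
      rw [hc] at hpos
      simp [wsum] at hpos
    obtain ⟨x, hx⟩ := this
    exact ⟨x, hx, hXu x hx⟩
  have hnbhd : nbhd X A = {u} := by
    apply Finset.ext
    intro a
    simp only [nbhd, Finset.mem_filter, Finset.mem_singleton]
    constructor
    · rintro ⟨ha, x, hx, hxa⟩
      rcases Finset.mem_union.mp hx with h | h
      · exact hF1nb x h a ha hxa
      · obtain ⟨v, hv, rfl⟩ := Finset.mem_image.mp h
        exact (ht v hv).2.2.2 a ha hxa
    · rintro rfl
      obtain ⟨x, hx, hxu⟩ := hXne
      exact ⟨hu, x, hx, hxu⟩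
  have hXcard : X.card ≤ 10 := by
    have hu0 : u.Nonempty := Finset.card_pos.mp (by omega)
    have hle : X.card ≤ u.card := by
      apply Finset.card_le_card_of_injOn
        (fun x => if h : (x ∩ u).Nonempty then h.choose else hu0.choose)
      · intro x hx
        have h := hXu x hx
        dsimp only
        rw [dif_pos h]
        exact (Finset.mem_inter.mp h.choose_spec).2
      · intro x hx y hy hfe
        simp only at hfe
        rw [dif_pos (hXu x hx), dif_pos (hXu y hy)] at hfe
        by_contra hne
        have hd := hXdisj x hx y hy hne
        have hmem : (hXu x hx).choose ∈ x ∩ y := Finset.mem_inter.mpr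
          ⟨(Finset.mem_inter.mp (hXu x hx).choose_spec).1,
           hfe ▸ (Finset.mem_inter.mp (hXu y hy).choose_spec).1⟩
        rw [hd] at hmem
        exact absurd hmem (Finset.notMem_empty _)
    omega
  have himp : IsLocalImprovement A X := by
    refine ⟨hXdisj, Or.inl ?_⟩
    rw [hnbhd]
    have h1 : wsum {u} = wt u := by simp [wsum]
    rw [h1, hXeq]
    exact hgt
  exact hnoimp X hXS hXcard himp
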